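/- arXiv:2503.18558 — 2 statements merged into one kernel-verified Lean document; each statement's English description precedes it below -/
import Mathlib

section
/- Let K be a field of characteristic 0. Then the subgroup of GL_2(K) generated by the matrices A = [[1,0],[2,1]] and B = [[1,2],[0,1]] is a free group of rank 2; that is, the group homomorphism from the free group on two generators to GL_2(K) sending the two generators to A and B, respectively, is injective. -/
namespace SanovAux
open Matrix Pointwise
abbrev V : Type := {v : Fin 2 → ℚ // v ≠ 0}

instance : SMul (GL (Fin 2) ℚ) V :=
  ⟨fun g v => ⟨(g : Matrix (Fin 2) (Fin 2) ℚ).mulVec v.1, by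
    intro h
    apply v.2
    have := congrArg (fun w => (g.inv).mulVec w) h
    simp only [Matrix.mulVec_mulVec, Matrix.mulVec_zero] at this
    rwa [g.inv_val, Matrix.one_mulVec] at this⟩⟩

lemma smul_def (g : GL (Fin 2) ℚ) (v : V) :
    (g • v).1 = (g : Matrix (Fin 2) (Fin 2) ℚ).mulVec v.1 := rfl

instance : MulAction (GL (Fin 2) ℚ) V where
  one_smul v := Subtype.ext (by rw [smul_def]; simp)
  mul_smul g h v := Subtype.ext (by rw [smul_def, smul_def, smul_def, Units.val_mul, Matrix.mulVec_mulVec])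

def Aq : GL (Fin 2) ℚ :=
  ⟨!![1,0;2,1], !![1,0;-2,1],
   by ext i j; fin_cases i <;> fin_cases j <;> simp [Matrix.mul_apply, Fin.sum_univ_two],
   by ext i j; fin_cases i <;> fin_cases j <;> simp [Matrix.mul_apply, Fin.sum_univ_two]⟩

def Bq : GL (Fin 2) ℚ :=
  ⟨!![1,2;0,1], !![1,-2;0,1],
   by ext i j; fin_cases i <;> fin_cases j <;> simp [Matrix.mul_apply, Fin.sum_univ_two],
   by ext i j; fin_cases i <;> fin_cases j <;> simp [Matrix.mul_apply, Fin.sum_univ_two]⟩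

lemma Aq_smul (v : V) (i : Fin 2) :
    (Aq • v).1 i = ![v.1 0, 2 * v.1 0 + v.1 1] i := by
  rw [smul_def]
  fin_cases i <;>
    · simp [Aq, Matrix.mulVec, dotProduct, Fin.sum_univ_two, Matrix.vecHead, Matrix.vecTail]; try ring

lemma Aq_inv_smul (v : V) (i : Fin 2) :
    (Aq⁻¹ • v).1 i = ![v.1 0, v.1 1 - 2 * v.1 0] i := by
  rw [smul_def]
  fin_cases i <;>
    · simp [Aq, Units.inv_mk, Matrix.mulVec, dotProduct, Fin.sum_univ_two, Matrix.vecHead, Matrix.vecTail]; try ring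

lemma Bq_smul (v : V) (i : Fin 2) :
    (Bq • v).1 i = ![v.1 0 + 2 * v.1 1, v.1 1] i := by
  rw [smul_def]
  fin_cases i <;>
    · simp [Bq, Matrix.mulVec, dotProduct, Fin.sum_univ_two, Matrix.vecHead, Matrix.vecTail]; try ring

lemma Bq_inv_smul (v : V) (i : Fin 2) :
    (Bq⁻¹ • v).1 i = ![v.1 0 - 2 * v.1 1, v.1 1] i := by
  rw [smul_def]
  fin_cases i <;>
    · simp [Bq, Units.inv_mk, Matrix.mulVec, dotProduct, Fin.sum_univ_two, Matrix.vecHead, Matrix.vecTail]; try ring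

def aa : Bool → GL (Fin 2) ℚ := fun t => if t then Aq else Bq

end SanovAux

namespace SanovAux
open Matrix Pointwise

def XX : Bool → Set V
  | true => {v | v.1 0 * v.1 1 ≥ (v.1 0)^2}
  | false => {v | v.1 1 = 0 ∨ v.1 0 * v.1 1 > (v.1 1)^2}

def YY : Bool → Set V
  | true => {v | v.1 0 ≠ 0 ∧ v.1 0 * v.1 1 < -(v.1 0)^2}
  | false => {v | v.1 1 ≠ 0 ∧ v.1 0 * v.1 1 ≤ -(v.1 1)^2}

lemma hXmove : ∀ i, aa i • (YY i)ᶜ ⊆ XX i := by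
  intro i w hw
  rw [Set.mem_smul_set] at hw
  obtain ⟨v, hv, rfl⟩ := hw
  cases i
  · -- B
    simp only [aa, if_neg Bool.false_ne_true, YY, Set.mem_compl_iff, Set.mem_setOf_eq,
      not_and, not_le] at hv
    show Bq • v ∈ XX false
    simp only [XX, Set.mem_setOf_eq, Bq_smul]
    simp only [Matrix.cons_val_zero, Matrix.cons_val_one, Matrix.head_cons]
    by_cases hy : v.1 1 = 0
    · exact Or.inl hy
    · right
      have h := hv hy
      nlinarith [sq_nonneg (v.1 1)]
  · -- A
    simp only [aa, if_pos rfl, YY, Set.mem_compl_iff, Set.mem_setOf_eq, not_and, not_lt] at hv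
    show Aq • v ∈ XX true
    simp only [XX, Set.mem_setOf_eq, Aq_smul]
    simp only [Matrix.cons_val_zero, Matrix.cons_val_one, Matrix.head_cons]
    by_cases hx : v.1 0 = 0
    · simp [hx]
    · have h := hv hx
      nlinarith [sq_nonneg (v.1 0)]

lemma hYmove : ∀ i, aa⁻¹ i • (XX i)ᶜ ⊆ YY i := by
  intro i w hw
  rw [Set.mem_smul_set] at hw
  obtain ⟨v, hv, rfl⟩ := hw
  cases i
  · -- B⁻¹
    simp only [XX, Set.mem_compl_iff, Set.mem_setOf_eq, not_or, not_lt] at hv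
    obtain ⟨hy, h⟩ := hv
    show _ ∈ YY false
    have hB : aa⁻¹ false = Bq⁻¹ := by simp [aa]
    simp only [YY, Set.mem_setOf_eq, hB, Bq_inv_smul]
    simp only [Matrix.cons_val_zero, Matrix.cons_val_one, Matrix.head_cons]
    exact ⟨hy, by nlinarith [sq_nonneg (v.1 1)]⟩
  · -- A⁻¹
    simp only [XX, Set.mem_compl_iff, Set.mem_setOf_eq, not_le] at hv
    show _ ∈ YY true
    have hA : aa⁻¹ true = Aq⁻¹ := by simp [aa]
    simp only [YY, Set.mem_setOf_eq, hA, Aq_inv_smul]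
    simp only [Matrix.cons_val_zero, Matrix.cons_val_one, Matrix.head_cons]
    have hx : v.1 0 ≠ 0 := by
      intro h0
      rw [h0] at hv
      simp at hv
    exact ⟨hx, by nlinarith [sq_nonneg (v.1 0)]⟩

lemma nz (v : V) : v.1 0 ≠ 0 ∨ v.1 1 ≠ 0 := by
  by_contra h
  push_neg at h
  exact v.2 (funext fun i => by fin_cases i <;> simp [h.1, h.2])

lemma not_mem_Xt_Xf (v : V) : ¬(v ∈ XX true ∧ v ∈ XX false) := by
  rintro ⟨h1, h2⟩
  simp only [XX, Set.mem_setOf_eq] at h1 h2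
  rcases h2 with h | h
  · rcases nz v with h0 | h0
    · have hx : 0 < (v.1 0)^2 := by positivity
      rw [h, mul_zero] at h1
      linarith
    · exact h0 h
  · rcases nz v with h0 | h0
    · have hx : 0 < (v.1 0)^2 := by positivity
      nlinarith [sq_nonneg (v.1 1)]
    · have hy : 0 < (v.1 1)^2 := by positivity
      nlinarith [sq_nonneg (v.1 0)]

lemma not_mem_Yt_Yf (v : V) : ¬(v ∈ YY true ∧ v ∈ YY false) := by
  rintro ⟨⟨hx0, h1⟩, hy0, h2⟩
  have hx : 0 < (v.1 0)^2 := by positivity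
  have hy : 0 < (v.1 1)^2 := by positivity
  nlinarith

lemma not_mem_X_Y (v : V) (i j : Bool) : ¬(v ∈ XX i ∧ v ∈ YY j) := by
  rintro ⟨h1, h2⟩
  cases i <;> cases j <;>
    simp only [XX, YY, Set.mem_setOf_eq] at h1 h2
  · -- X false, Y false
    obtain ⟨hy0, h2⟩ := h2
    have hy : 0 < (v.1 1)^2 := by positivity
    rcases h1 with h | h
    · exact hy0 h
    · linarith
  · -- X false, Y true
    obtain ⟨hx0, h2⟩ := h2
    have hx : 0 < (v.1 0)^2 := by positivity
    rcases h1 with h | h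
    · rw [h, mul_zero] at h2; linarith
    · nlinarith [sq_nonneg (v.1 1)]
  · -- X true, Y false
    obtain ⟨hy0, h2⟩ := h2
    have hy : 0 < (v.1 1)^2 := by positivity
    nlinarith [sq_nonneg (v.1 0)]
  · -- X true, Y true
    obtain ⟨hx0, h2⟩ := h2
    have hx : 0 < (v.1 0)^2 := by positivity
    linarith

lemma XXdisj : Pairwise (Function.onFun Disjoint XX) := by
  intro i j hij
  simp only [Function.onFun]
  rw [Set.disjoint_left]
  intro v hvi hvj
  cases i <;> cases j <;> simp at hij
  · exact not_mem_Xt_Xf v ⟨hvj, hvi⟩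
  · exact not_mem_Xt_Xf v ⟨hvi, hvj⟩

lemma YYdisj : Pairwise (Function.onFun Disjoint YY) := by
  intro i j hij
  simp only [Function.onFun]
  rw [Set.disjoint_left]
  intro v hvi hvj
  cases i <;> cases j <;> simp at hij
  · exact not_mem_Yt_Yf v ⟨hvj, hvi⟩
  · exact not_mem_Yt_Yf v ⟨hvi, hvj⟩

lemma XYdisj : ∀ i j, Disjoint (XX i) (YY j) := by
  intro i j
  rw [Set.disjoint_left]
  intro v hvi hvj
  exact not_mem_X_Y v i j ⟨hvi, hvj⟩

lemma XXnonempty : ∀ i, (XX i).Nonempty := by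
  intro i
  cases i
  · exact ⟨⟨![1, 0], by intro h; simpa using congrFun h 0⟩, by left; simp⟩
  · exact ⟨⟨![0, 1], by intro h; simpa using congrFun h 1⟩, by simp [XX]⟩


lemma injQ : Function.Injective (FreeGroup.lift aa) :=
  FreeGroup.injective_lift_of_ping_pong aa XX YY XXnonempty XXdisj YYdisj XYdisj hXmove hYmove

end SanovAux

open SanovAux in
/-- **Sanov's theorem over a field of characteristic 0.** Let `K` be a field of
characteristic `0`. The subgroup of `GL₂(K)` generated by the matrices
`A = !![1,0;2,1]` and `B = !![1,2;0,1]` is free of rank 2: the group homomorphism from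
the free group on two generators (indexed by `Bool`) sending the generators
to `A` and `B` is injective. -/
theorem sanov_free_subgroup_GL2_charZero (K : Type) [Field K] [CharZero K] :
    ∃ A B : GL (Fin 2) K,
      (A : Matrix (Fin 2) (Fin 2) K) = !![1, 0; 2, 1] ∧
      (B : Matrix (Fin 2) (Fin 2) K) = !![1, 2; 0, 1] ∧
      Function.Injective (FreeGroup.lift fun t : Bool => if t then A else B) := by
  classical
  let phi : ℚ →+* K := algebraMap ℚ K
  have hphi : Function.Injective phi := phi.injective
  let phiM : Matrix (Fin 2) (Fin 2) ℚ →+* Matrix (Fin 2) (Fin 2) K := phi.mapMatrix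
  have hphiM : Function.Injective phiM := fun M N h => by
    ext i j
    exact hphi (congrFun (congrFun (congrArg Matrix.of.symm h) i) j)
  let psi : GL (Fin 2) ℚ →* GL (Fin 2) K := Units.map phiM.toMonoidHom
  have hpsi : Function.Injective psi := Units.map_injective hphiM
  refine ⟨psi Aq, psi Bq, ?_, ?_, ?_⟩
  · show phiM Aq.val = _
    ext i j
    fin_cases i <;> fin_cases j <;> simp [phiM, Aq, phi]
  · show phiM Bq.val = _
    ext i j
    fin_cases i <;> fin_cases j <;> simp [phiM, Bq, phi]
  · have hcomp : (FreeGroup.lift fun t : Bool => if t then psi Aq else psi Bq) =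
        psi.comp (FreeGroup.lift aa) := by
      apply FreeGroup.ext_hom
      intro t
      cases t <;> simp [aa]
    rw [hcomp]
    exact hpsi.comp injQ
end

section
/- Let K be a field of characteristic 0 and E a directed graph with E⁰ finite such that the Leavitt path algebra L_K(E) is noncommutative. Then the multiplicative group L_K(E)^× of units of L_K(E) contains a non-cyclic free subgroup; that is, there exist units a, b of L_K(E) such that the group homomorphism from the free group on two generators to L_K(E)^× sending the two generators to a and b, respectively, is injective. -/
open Pointwise

abbrev M2 : Type := Matrix (Fin 2) (Fin 2) ℚ

def uA : M2ˣ :=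
  ⟨!![1,6;0,1], !![1,-6;0,1], by ext i j; fin_cases i <;> fin_cases j <;>
      simp [Matrix.mul_apply, Fin.sum_univ_two],
    by ext i j; fin_cases i <;> fin_cases j <;> simp [Matrix.mul_apply, Fin.sum_univ_two]⟩

def uB : M2ˣ :=
  ⟨!![1,0;6,1], !![1,0;-6,1], by ext i j; fin_cases i <;> fin_cases j <;>
      simp [Matrix.mul_apply, Fin.sum_univ_two],
    by ext i j; fin_cases i <;> fin_cases j <;> simp [Matrix.mul_apply, Fin.sum_univ_two]⟩

abbrev Vnz : Type := {v : Fin 2 → ℚ // v ≠ 0}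

instance : MulAction M2ˣ Vnz where
  smul g v := ⟨g.val.mulVec v.1, fun h => v.2 (by
    have h2 : (g⁻¹.val).mulVec (g.val.mulVec v.1) = g⁻¹.val.mulVec 0 := by rw [h]
    rw [Matrix.mulVec_mulVec, ← Units.val_mul, inv_mul_cancel, Units.val_one,
      Matrix.one_mulVec, Matrix.mulVec_zero] at h2
    exact h2)⟩
  one_smul v := Subtype.ext (by simp [HSMul.hSMul, SMul.smul])
  mul_smul g h v := Subtype.ext (by
    show (g * h).val.mulVec v.1 = g.val.mulVec (h.val.mulVec v.1)
    rw [Units.val_mul, Matrix.mulVec_mulVec])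

lemma smul_val (g : M2ˣ) (v : Vnz) : (g • v).1 = g.val.mulVec v.1 := rfl

lemma uA_smul (v : Vnz) (i : Fin 2) :
    (uA • v).1 i = if i = 0 then v.1 0 + 6 * v.1 1 else v.1 1 := by
  fin_cases i <;>
    simp [smul_val, uA, Matrix.mulVec, dotProduct, Fin.sum_univ_two]

lemma uB_smul (v : Vnz) (i : Fin 2) :
    (uB • v).1 i = if i = 0 then v.1 0 else 6 * v.1 0 + v.1 1 := by
  fin_cases i <;>
    simp [smul_val, uB, Matrix.mulVec, dotProduct, Fin.sum_univ_two]

lemma uAinv_smul (v : Vnz) (i : Fin 2) :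
    (uA⁻¹ • v).1 i = if i = 0 then v.1 0 - 6 * v.1 1 else v.1 1 := by
  fin_cases i <;>
    simp [smul_val, uA, Matrix.mulVec, dotProduct, Fin.sum_univ_two] <;> ring

lemma uBinv_smul (v : Vnz) (i : Fin 2) :
    (uB⁻¹ • v).1 i = if i = 0 then v.1 0 else -6 * v.1 0 + v.1 1 := by
  fin_cases i <;>
    simp [smul_val, uB, Matrix.mulVec, dotProduct, Fin.sum_univ_two] <;> ring

def XX : Bool → Set Vnz := fun t => if t then
    {v | v.1 1 = 0 ∨ v.1 0 * v.1 1 > 3 * (v.1 1)^2}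
  else
    {v | v.1 0 = 0 ∨ v.1 0 * v.1 1 > 3 * (v.1 0)^2}

def YY : Bool → Set Vnz := fun t => if t then
    {v | v.1 1 ≠ 0 ∧ v.1 0 * v.1 1 ≤ -(3 * (v.1 1)^2)}
  else
    {v | v.1 0 ≠ 0 ∧ v.1 0 * v.1 1 ≤ -(3 * (v.1 0)^2)}

lemma mem_XX_true (v : Vnz) : v ∈ XX true ↔ (v.1 1 = 0 ∨ v.1 0 * v.1 1 > 3 * (v.1 1)^2) :=
  Iff.rfl
lemma mem_XX_false (v : Vnz) : v ∈ XX false ↔ (v.1 0 = 0 ∨ v.1 0 * v.1 1 > 3 * (v.1 0)^2) :=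
  Iff.rfl
lemma mem_YY_true (v : Vnz) : v ∈ YY true ↔ (v.1 1 ≠ 0 ∧ v.1 0 * v.1 1 ≤ -(3 * (v.1 1)^2)) :=
  Iff.rfl
lemma mem_YY_false (v : Vnz) : v ∈ YY false ↔ (v.1 0 ≠ 0 ∧ v.1 0 * v.1 1 ≤ -(3 * (v.1 0)^2)) :=
  Iff.rfl

lemma vnz_cases (v : Vnz) : v.1 0 ≠ 0 ∨ v.1 1 ≠ 0 := by
  by_contra h
  push_neg at h
  exact v.2 (funext fun k => by fin_cases k <;> simp [h.1, h.2])

theorem sanov : Function.Injective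
    (FreeGroup.lift (fun t : Bool => if t then uA else uB)) := by
  apply FreeGroup.injective_lift_of_ping_pong _ XX YY
  · intro t
    cases t
    · exact ⟨⟨![0,1], fun h => by simpa using congrFun h 1⟩, Or.inl rfl⟩
    · exact ⟨⟨![1,0], fun h => by simpa using congrFun h 0⟩, Or.inl rfl⟩
  · intro i j hij
    simp only [Function.onFun]
    have key : ∀ v : Vnz, v ∈ XX true → v ∈ XX false → False := by
      rintro v h1 h2
      rw [mem_XX_true] at h1; rw [mem_XX_false] at h2
      rcases vnz_cases v with hv | hv
      · rcases h1 with h1 | h1 <;> rcases h2 with h2 | h2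
        · exact hv h2
        · rw [h1] at h2; nlinarith [sq_nonneg (v.1 0)]
        · rw [h2] at h1; nlinarith [sq_nonneg (v.1 1)]
        · nlinarith [sq_nonneg (v.1 0 - v.1 1), sq_nonneg (v.1 0 + v.1 1)]
      · rcases h1 with h1 | h1 <;> rcases h2 with h2 | h2
        · exact hv h1
        · rw [h1] at h2; nlinarith [sq_nonneg (v.1 0)]
        · rw [h2] at h1; nlinarith [sq_nonneg (v.1 1)]
        · nlinarith [sq_nonneg (v.1 0 - v.1 1), sq_nonneg (v.1 0 + v.1 1)]
    rw [Set.disjoint_left]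
    intro v hi hj
    cases i <;> cases j <;> first
      | exact absurd rfl hij
      | exact key v hi hj
      | exact key v hj hi
  · intro i j hij
    simp only [Function.onFun]
    have key : ∀ v : Vnz, v ∈ YY true → v ∈ YY false → False := by
      rintro v h1 h2
      rw [mem_YY_true] at h1; rw [mem_YY_false] at h2
      obtain ⟨h1, h1'⟩ := h1; obtain ⟨h2, h2'⟩ := h2
      nlinarith [sq_nonneg (v.1 0 - v.1 1), sq_nonneg (v.1 0 + v.1 1),
        sq_pos_of_ne_zero h1, sq_pos_of_ne_zero h2]
    rw [Set.disjoint_left]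
    intro v hi hj
    cases i <;> cases j <;> first
      | exact absurd rfl hij
      | exact key v hi hj
      | exact key v hj hi
  · intro i j
    rw [Set.disjoint_left]
    intro v hi hj
    cases i <;> cases j
    · rw [mem_XX_false] at hi; rw [mem_YY_false] at hj
      rcases hi with h | h
      · exact hj.1 h
      · nlinarith [hj.2, sq_nonneg (v.1 0)]
    · rw [mem_XX_false] at hi; rw [mem_YY_true] at hj
      rcases hi with h | h
      · rw [h] at hj; nlinarith [hj.2, sq_pos_of_ne_zero hj.1]
      · nlinarith [hj.2, sq_nonneg (v.1 1), sq_nonneg (v.1 0)]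
    · rw [mem_XX_true] at hi; rw [mem_YY_false] at hj
      rcases hi with h | h
      · rw [h] at hj; nlinarith [hj.2, sq_pos_of_ne_zero hj.1]
      · nlinarith [hj.2, sq_nonneg (v.1 1), sq_nonneg (v.1 0)]
    · rw [mem_XX_true] at hi; rw [mem_YY_true] at hj
      rcases hi with h | h
      · exact hj.1 h
      · nlinarith [hj.2, sq_nonneg (v.1 1)]
  · intro t
    rw [Set.smul_set_subset_iff]
    intro v hmem
    rw [Set.mem_compl_iff] at hmem
    cases t
    · rw [mem_YY_false] at hmem
      show uB • v ∈ XX false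
      rw [mem_XX_false]
      simp only [uB_smul]
      norm_num
      by_cases h0 : v.1 0 = 0
      · exact Or.inl h0
      · right
        have h1 : ¬ v.1 0 * v.1 1 ≤ -(3 * (v.1 0)^2) := fun hc => hmem ⟨h0, hc⟩
        push_neg at h1
        nlinarith [sq_pos_of_ne_zero h0]
    · rw [mem_YY_true] at hmem
      show uA • v ∈ XX true
      rw [mem_XX_true]
      simp only [uA_smul]
      norm_num
      by_cases h1 : v.1 1 = 0
      · exact Or.inl h1
      · right
        have h2 : ¬ v.1 0 * v.1 1 ≤ -(3 * (v.1 1)^2) := fun hc => hmem ⟨h1, hc⟩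
        push_neg at h2
        nlinarith [sq_pos_of_ne_zero h1]
  · intro t
    rw [Set.smul_set_subset_iff]
    intro v hmem
    rw [Set.mem_compl_iff] at hmem
    cases t
    · rw [mem_XX_false] at hmem
      push_neg at hmem
      obtain ⟨h0, h1⟩ := hmem
      show uB⁻¹ • v ∈ YY false
      rw [mem_YY_false]
      simp only [uBinv_smul]
      norm_num
      refine ⟨h0, ?_⟩
      nlinarith [sq_pos_of_ne_zero h0]
    · rw [mem_XX_true] at hmem
      push_neg at hmem
      obtain ⟨h0, h1⟩ := hmem
      show uA⁻¹ • v ∈ YY true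
      rw [mem_YY_true]
      simp only [uAinv_smul]
      norm_num
      refine ⟨h0, ?_⟩
      nlinarith [sq_pos_of_ne_zero h0]

section MatrixUnits

variable {R : Type} [Ring R]
    (hK : ∀ (n : ℤ) (x : R), n ≠ 0 → n • x = 0 → x = 0)
    (w : Fin 2 → Fin 2 → R)
    (hw : ∀ i j k l : Fin 2, w i j * w k l = if j = k then w i l else 0)
    (h00 : w 0 0 ≠ 0)

/-- The additive map from integer 2×2 matrices into `R` via the matrix units. -/
def phi (w : Fin 2 → Fin 2 → R) (M : Matrix (Fin 2) (Fin 2) ℤ) : R :=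
  M 0 0 • w 0 0 + M 0 1 • w 0 1 + M 1 0 • w 1 0 + M 1 1 • w 1 1

lemma phi_one : phi w 1 = w 0 0 + w 1 1 := by
  simp [phi, Matrix.one_apply]

lemma phi_sub (M N : Matrix (Fin 2) (Fin 2) ℤ) :
    phi w (M - N) = phi w M - phi w N := by
  simp only [phi, Matrix.sub_apply, sub_smul]
  abel

/-- `uu w M = (1 - p) + phi w M` -/
def uu (w : Fin 2 → Fin 2 → R) (M : Matrix (Fin 2) (Fin 2) ℤ) : R :=
  (1 - (w 0 0 + w 1 1)) + phi w M

lemma uu_one : uu w 1 = 1 := by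
  rw [uu, phi_one w]; abel

section
include hw

lemma hw_same (i j l : Fin 2) : w i j * w j l = w i l := by simpa using hw i j j l
lemma hw_ne (i j k l : Fin 2) (h : j ≠ k) : w i j * w k l = 0 := by
  simpa [h] using hw i j k l

lemma phi_mul (M N : Matrix (Fin 2) (Fin 2) ℤ) :
    phi w (M * N) = phi w M * phi w N := by
  have h01 : (0 : Fin 2) ≠ 1 := by decide
  have h10 : (1 : Fin 2) ≠ 0 := by decide
  simp only [phi, Matrix.mul_apply, Fin.sum_univ_two]
  simp only [add_mul, mul_add, smul_mul_smul_comm]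
  simp only [hw_same w hw, hw_ne w hw _ _ _ _ h01, hw_ne w hw _ _ _ _ h10,
    smul_zero, add_zero, zero_add, add_smul]
  abel

lemma p_idem : (w 0 0 + w 1 1) * (w 0 0 + w 1 1) = w 0 0 + w 1 1 := by
  have h01 : (0 : Fin 2) ≠ 1 := by decide
  have h10 : (1 : Fin 2) ≠ 0 := by decide
  simp [add_mul, mul_add, hw_same w hw, hw_ne w hw _ _ _ _ h01, hw_ne w hw _ _ _ _ h10]

lemma p_mul_phi (M : Matrix (Fin 2) (Fin 2) ℤ) :
    (w 0 0 + w 1 1) * phi w M = phi w M := by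
  have h01 : (0 : Fin 2) ≠ 1 := by decide
  have h10 : (1 : Fin 2) ≠ 0 := by decide
  simp only [phi, mul_add, add_mul, mul_smul_comm, hw_same w hw,
    hw_ne w hw _ _ _ _ h01, hw_ne w hw _ _ _ _ h10, smul_zero, add_zero, zero_add]

lemma phi_mul_p (M : Matrix (Fin 2) (Fin 2) ℤ) :
    phi w M * (w 0 0 + w 1 1) = phi w M := by
  have h01 : (0 : Fin 2) ≠ 1 := by decide
  have h10 : (1 : Fin 2) ≠ 0 := by decide
  simp only [phi, mul_add, add_mul, smul_mul_assoc, hw_same w hw,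
    hw_ne w hw _ _ _ _ h01, hw_ne w hw _ _ _ _ h10, smul_zero, add_zero, zero_add]
  abel

lemma uu_mul (M N : Matrix (Fin 2) (Fin 2) ℤ) :
    uu w M * uu w N = uu w (M * N) := by
  have expand : ∀ x y : R, (1 - (w 0 0 + w 1 1) + x) * (1 - (w 0 0 + w 1 1) + y) =
      (1 - (w 0 0 + w 1 1)) * (1 - (w 0 0 + w 1 1)) + (1 - (w 0 0 + w 1 1)) * y +
        x * (1 - (w 0 0 + w 1 1)) + x * y := by
    intro x y; noncomm_ring
  rw [uu, uu, uu, expand]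
  have e1 : (1 - (w 0 0 + w 1 1)) * (1 - (w 0 0 + w 1 1)) = 1 - (w 0 0 + w 1 1) := by
    have := p_idem w hw
    simp [sub_mul, mul_sub, this]
  have e2 : (1 - (w 0 0 + w 1 1)) * phi w N = 0 := by
    simp [sub_mul, p_mul_phi w hw]
  have e3 : phi w M * (1 - (w 0 0 + w 1 1)) = 0 := by
    simp [mul_sub, phi_mul_p w hw]
  rw [e1, e2, e3, ← phi_mul w hw]
  abel

lemma extract (D : Matrix (Fin 2) (Fin 2) ℤ) :
    ∀ i j : Fin 2, w 0 i * phi w D * w j 0 = D i j • w 0 0 := by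
  have h01 : (0 : Fin 2) ≠ 1 := by decide
  have h10 : (1 : Fin 2) ≠ 0 := by decide
  simp only [Fin.forall_fin_two]
  refine ⟨⟨?_, ?_⟩, ?_, ?_⟩ <;>
    simp only [phi, mul_add, add_mul, mul_smul_comm, smul_mul_assoc,
      hw_same w hw, hw_ne w hw _ _ _ _ h01, hw_ne w hw _ _ _ _ h10,
      smul_zero, zero_mul, mul_zero, add_zero, zero_add]

include hK h00 in
lemma phi_inj (M N : Matrix (Fin 2) (Fin 2) ℤ) (h : phi w M = phi w N) : M = N := by
  have hz : phi w (M - N) = 0 := by rw [phi_sub, h, sub_self]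
  ext i j
  by_contra hne
  have key : (M - N) i j • w 0 0 = 0 := by
    rw [← extract w hw (M - N) i j, hz, mul_zero, zero_mul]
  have hne' : (M - N) i j ≠ 0 := by
    simpa [Matrix.sub_apply, sub_eq_zero] using hne
  exact h00 (hK _ _ hne' key)

/-- the unit of `R` associated to a unit of the integer matrix ring -/
def PsiFun (g : (Matrix (Fin 2) (Fin 2) ℤ)ˣ) : Rˣ where
  val := uu w g.val
  inv := uu w g.inv
  val_inv := by rw [uu_mul w hw, g.val_inv, uu_one w]
  inv_val := by rw [uu_mul w hw, g.inv_val, uu_one w]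

def Psi : (Matrix (Fin 2) (Fin 2) ℤ)ˣ →* Rˣ where
  toFun := PsiFun w hw
  map_one' := by
    apply Units.ext
    show uu w (1 : (Matrix (Fin 2) (Fin 2) ℤ)ˣ).val = 1
    rw [Units.val_one, uu_one w]
  map_mul' g h := by
    apply Units.ext
    show uu w (g * h).val = uu w g.val * uu w h.val
    rw [Units.val_mul, uu_mul w hw]

include hK h00 in
lemma Psi_injective : Function.Injective (Psi w hw) := by
  intro g h hgh
  have h2 : uu w g.val = uu w h.val := congrArg Units.val hgh
  apply Units.ext
  apply phi_inj hK w hw h00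
  rw [uu, uu] at h2
  exact add_left_cancel h2

end

/-- integer Sanov matrices as units -/
def zA : (Matrix (Fin 2) (Fin 2) ℤ)ˣ :=
  ⟨!![1,6;0,1], !![1,-6;0,1], by ext i j; fin_cases i <;> fin_cases j <;>
      simp [Matrix.mul_apply, Fin.sum_univ_two],
    by ext i j; fin_cases i <;> fin_cases j <;> simp [Matrix.mul_apply, Fin.sum_univ_two]⟩

def zB : (Matrix (Fin 2) (Fin 2) ℤ)ˣ :=
  ⟨!![1,0;6,1], !![1,0;-6,1], by ext i j; fin_cases i <;> fin_cases j <;>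
      simp [Matrix.mul_apply, Fin.sum_univ_two],
    by ext i j; fin_cases i <;> fin_cases j <;> simp [Matrix.mul_apply, Fin.sum_univ_two]⟩

lemma zlift_injective : Function.Injective
    (FreeGroup.lift (fun t : Bool => if t then zA else zB)) := by
  have hcomp : (FreeGroup.lift (fun t : Bool => if t then uA else uB)) =
      (Units.map ((Int.castRingHom ℚ).mapMatrix.toMonoidHom)).comp
        (FreeGroup.lift (fun t : Bool => if t then zA else zB)) := by
    apply FreeGroup.ext_hom
    intro t
    cases t <;>
      · simp only [FreeGroup.lift_apply_of, MonoidHom.comp_apply, if_true, if_false]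
        apply Units.ext
        show _ = (Int.castRingHom ℚ).mapMatrix _
        ext i j
        fin_cases i <;> fin_cases j <;>
          simp [uA, uB, zA, zB, RingHom.mapMatrix_apply, Matrix.map_apply]
  have hinj := sanov
  rw [hcomp, MonoidHom.coe_comp] at hinj
  exact hinj.of_comp

include hK hw h00 in
theorem free_units_of_matrix_units :
    ∃ a b : Rˣ, Function.Injective (FreeGroup.lift fun t : Bool => if t then a else b) := by
  refine ⟨Psi w hw zA, Psi w hw zB, ?_⟩
  have hcomp : (FreeGroup.lift fun t : Bool => if t then Psi w hw zA else Psi w hw zB) =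
      (Psi w hw).comp (FreeGroup.lift fun t : Bool => if t then zA else zB) := by
    apply FreeGroup.ext_hom
    intro t
    cases t <;> simp
  rw [hcomp, MonoidHom.coe_comp]
  exact (Psi_injective hK w hw h00).comp zlift_injective

end MatrixUnits



/-! Leavitt path algebra of a directed graph with finitely many vertices.
The graph is given by types `V` (vertices), `E` (edges) and maps `src rng : E → V`. -/

/-- A vertex is a sink if it emits no edges. -/
def IsSink {V E : Type} (src : E → V) (v : V) : Prop := ∀ e : E, src e ≠ v

/-- A vertex is an infinite emitter if it emits infinitely many edges. -/
def IsInfEmitter {V E : Type} (src : E → V) (v : V) : Prop :=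
  {e : E | src e = v}.Infinite

/-- A vertex is regular if it is neither a sink nor an infinite emitter. -/
def IsRegularVertex {V E : Type} (src : E → V) (v : V) : Prop :=
  ¬ IsSink src v ∧ ¬ IsInfEmitter src v

/-- The generator of the free algebra corresponding to a vertex `v`. -/
def vtx (K V E : Type) [Field K] (v : V) : FreeAlgebra K (V ⊕ E ⊕ E) :=
  FreeAlgebra.ι K (Sum.inl v)

/-- The generator of the free algebra corresponding to an edge `e`. -/
def edg (K V E : Type) [Field K] (e : E) : FreeAlgebra K (V ⊕ E ⊕ E) :=
  FreeAlgebra.ι K (Sum.inr (Sum.inl e))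

/-- The generator of the free algebra corresponding to a ghost edge `e*`. -/
def ghe (K V E : Type) [Field K] (e : E) : FreeAlgebra K (V ⊕ E ⊕ E) :=
  FreeAlgebra.ι K (Sum.inr (Sum.inr e))

/-- The defining relations of the Leavitt path algebra `L_K(E)`: (V), (E1), (E2),
(CK1), (CK2), together with `1 = Σ_{v ∈ E⁰} v` (which makes sense as `V` is finite). -/
inductive LeavittRel (K V E : Type) [Field K] [Fintype V] (src rng : E → V) :
    FreeAlgebra K (V ⊕ E ⊕ E) → FreeAlgebra K (V ⊕ E ⊕ E) → Prop
  | vtx_same (v : V) :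
      LeavittRel K V E src rng (vtx K V E v * vtx K V E v) (vtx K V E v)
  | vtx_ne (v v' : V) (h : v ≠ v') :
      LeavittRel K V E src rng (vtx K V E v * vtx K V E v') 0
  | src_edge (e : E) :
      LeavittRel K V E src rng (vtx K V E (src e) * edg K V E e) (edg K V E e)
  | edge_rng (e : E) :
      LeavittRel K V E src rng (edg K V E e * vtx K V E (rng e)) (edg K V E e)
  | rng_ghost (e : E) :
      LeavittRel K V E src rng (vtx K V E (rng e) * ghe K V E e) (ghe K V E e)
  | ghost_src (e : E) :
      LeavittRel K V E src rng (ghe K V E e * vtx K V E (src e)) (ghe K V E e)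
  | ck1_same (e : E) :
      LeavittRel K V E src rng (ghe K V E e * edg K V E e) (vtx K V E (rng e))
  | ck1_ne (e f : E) (h : e ≠ f) :
      LeavittRel K V E src rng (ghe K V E e * edg K V E f) 0
  | ck2 (v : V) (hreg : IsRegularVertex src v) :
      LeavittRel K V E src rng (vtx K V E v)
        (∑ e ∈ (Set.not_infinite.mp hreg.2).toFinset, edg K V E e * ghe K V E e)
  | unit : LeavittRel K V E src rng (∑ v : V, vtx K V E v) 1

/-- The Leavitt path algebra `L_K(E)` of a graph with finitely many vertices. -/
abbrev LPA (K V E : Type) [Field K] [Fintype V] (src rng : E → V) : Type :=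
  RingQuot (LeavittRel K V E src rng)

/-- The image of a vertex `v` in `L_K(E)`. -/
noncomputable def Vtx (K V E : Type) [Field K] [Fintype V] (src rng : E → V) (v : V) :
    LPA K V E src rng :=
  RingQuot.mkAlgHom K (LeavittRel K V E src rng) (vtx K V E v)

/-- The image of an edge `e` in `L_K(E)`. -/
noncomputable def Edg (K V E : Type) [Field K] [Fintype V] (src rng : E → V) (e : E) :
    LPA K V E src rng :=
  RingQuot.mkAlgHom K (LeavittRel K V E src rng) (edg K V E e)

/-- The image of a ghost edge `e*` in `L_K(E)`. -/
noncomputable def Ghe (K V E : Type) [Field K] [Fintype V] (src rng : E → V) (e : E) :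
    LPA K V E src rng :=
  RingQuot.mkAlgHom K (LeavittRel K V E src rng) (ghe K V E e)


section Representation

variable {V E : Type}

/-- A boundary path: a finite or infinite path whose last vertex (if any) is not regular. -/
@[ext]
structure BPath (src rng : E → V) : Type where
  base : V
  seq : ℕ → Option E
  compat0 : ∀ e, seq 0 = some e → src e = base
  compat : ∀ n e, seq (n+1) = some e → ∃ f, seq n = some f ∧ rng f = src e
  bdryTriv : seq 0 = none → ¬ IsRegularVertex src base
  bdry : ∀ n e, seq n = some e → seq (n+1) = none → ¬ IsRegularVertex src (rng e)

/-- prepend an edge to a boundary path -/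
def BPath.prepend {src rng : E → V} (p : BPath src rng) (e : E) (h : p.base = rng e) :
    BPath src rng where
  base := src e
  seq := fun n => match n with
    | 0 => some e
    | m+1 => p.seq m
  compat0 := fun e' he' => by
    simp only at he'
    cases he'
    rfl
  compat := fun n e' he' => by
    match n with
    | 0 =>
      exact ⟨e, rfl, by rw [← h]; exact (p.compat0 e' he').symm⟩
    | m+1 =>
      exact p.compat m e' he'
  bdryTriv := fun h0 => by simp at h0
  bdry := fun n e' he' hn => by
    match n with
    | 0 =>
      simp only at he'
      cases he'
      rw [← h]
      exact p.bdryTriv hn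
    | m+1 =>
      exact p.bdry m e' he' hn

/-- the tail of a boundary path starting with an edge -/
def BPath.tail {src rng : E → V} (p : BPath src rng) (e : E) (h : p.seq 0 = some e) :
    BPath src rng where
  base := rng e
  seq := fun n => p.seq (n+1)
  compat0 := fun e' he' => by
    obtain ⟨f, hf, hrf⟩ := p.compat 0 e' he'
    rw [h] at hf
    cases hf
    exact hrf.symm
  compat := fun n e' he' => p.compat (n+1) e' he'
  bdryTriv := fun h0 => p.bdry 0 e h h0
  bdry := fun n e' he' hn => p.bdry (n+1) e' he' hn

open scoped Classical

variable (src rng : E → V)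

/-- the action of a vertex on boundary paths -/
noncomputable def vAct (v : V) (p : BPath src rng) : Option (BPath src rng) :=
  if p.base = v then some p else none

/-- the action of an edge on boundary paths -/
noncomputable def eAct (e : E) (p : BPath src rng) : Option (BPath src rng) :=
  if h : p.base = rng e then some (p.prepend e h) else none

/-- the action of a ghost edge on boundary paths -/
noncomputable def gAct (e : E) (p : BPath src rng) : Option (BPath src rng) :=
  if h : p.seq 0 = some e then some (p.tail e h) else none

variable (K : Type) [Field K]

/-- extend a partial map on boundary paths to a linear endomorphism of the path module -/
noncomputable def act (f : BPath src rng → Option (BPath src rng)) :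
    Module.End K (BPath src rng →₀ K) :=
  Finsupp.lsum K (fun p => ((f p).elim 0 (fun q => Finsupp.lsingle q) : K →ₗ[K] _))

lemma act_single (f : BPath src rng → Option (BPath src rng)) (p : BPath src rng) (c : K) :
    act src rng K f (Finsupp.single p c) =
      (f p).elim 0 (fun q => Finsupp.single q c) := by
  rw [act, Finsupp.lsum_single]
  cases f p <;> simp

lemma act_comp (f g : BPath src rng → Option (BPath src rng)) :
    act src rng K f * act src rng K g = act src rng K (fun p => (g p).bind f) := by
  apply Finsupp.lhom_ext
  intro p c
  rw [Module.End.mul_apply, act_single, act_single]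
  cases hgp : g p with
  | none => simp
  | some q => simp [act_single]

/-- the representation of the free algebra on the path module -/
noncomputable def rep : FreeAlgebra K (V ⊕ E ⊕ E) →ₐ[K]
    Module.End K (BPath src rng →₀ K) :=
  FreeAlgebra.lift K (fun x => match x with
    | .inl v => act src rng K (vAct src rng v)
    | .inr (.inl e) => act src rng K (eAct src rng e)
    | .inr (.inr e) => act src rng K (gAct src rng e))

lemma rep_vtx (v : V) : rep src rng K (vtx K V E v) = act src rng K (vAct src rng v) := by
  rw [vtx, rep, FreeAlgebra.lift_ι_apply]

lemma rep_edg (e : E) : rep src rng K (edg K V E e) = act src rng K (eAct src rng e) := by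
  rw [edg, rep, FreeAlgebra.lift_ι_apply]

lemma rep_ghe (e : E) : rep src rng K (ghe K V E e) = act src rng K (gAct src rng e) := by
  rw [ghe, rep, FreeAlgebra.lift_ι_apply]

lemma prepend_tail {src rng : E → V} (p : BPath src rng) (e : E) (h : p.seq 0 = some e)
    (h' : (p.tail e h).base = rng e) : (p.tail e h).prepend e h' = p := by
  ext1
  · exact p.compat0 e h
  · funext n
    cases n with
    | zero => exact h.symm
    | succ m => rfl

lemma tail_prepend {src rng : E → V} (p : BPath src rng) (e : E) (h : p.base = rng e)
    (h' : (p.prepend e h).seq 0 = some e) : (p.prepend e h).tail e h' = p := by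
  ext1
  · exact h.symm
  · rfl

lemma eg_opt (e : E) (p : BPath src rng) :
    (gAct src rng e p).bind (eAct src rng e) = if p.seq 0 = some e then some p else none := by
  rw [gAct]
  split_ifs with h
  · rw [Option.bind_some, eAct]
    have hb : (p.tail e h).base = rng e := rfl
    rw [dif_pos hb, prepend_tail]
  · rfl

lemma rep_rel [Fintype V] {x y : FreeAlgebra K (V ⊕ E ⊕ E)}
    (h : LeavittRel K V E src rng x y) : rep src rng K x = rep src rng K y := by
  cases h with
  | vtx_same v =>
    rw [map_mul, rep_vtx, act_comp]
    congr 1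
    funext p
    rw [vAct]
    split_ifs with h
    · rw [Option.bind_some, vAct, if_pos h]
    · rfl
  | vtx_ne v v' hne =>
    rw [map_mul, rep_vtx, rep_vtx, act_comp, map_zero]
    have heq : (fun p : BPath src rng => (vAct src rng v' p).bind (vAct src rng v)) =
        fun _ => none := by
      funext p
      rw [vAct]
      split_ifs with h
      · rw [Option.bind_some, vAct, if_neg (by rw [h]; exact fun hc => hne hc.symm)]
      · rfl
    rw [heq]
    apply Finsupp.lhom_ext
    intro p c
    rw [act_single]
    simp
  | src_edge e =>
    rw [map_mul, rep_vtx, rep_edg, act_comp]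
    congr 1
    funext p
    rw [eAct]
    split_ifs with h
    · rw [Option.bind_some, vAct]
      have hb : (p.prepend e h).base = src e := rfl
      rw [if_pos hb]
    · rfl
  | edge_rng e =>
    rw [map_mul, rep_vtx, rep_edg, act_comp]
    congr 1
    funext p
    rw [vAct]
    split_ifs with h
    · rw [Option.bind_some]
    · simp only [Option.bind_none, eAct, dif_neg h]
  | rng_ghost e =>
    rw [map_mul, rep_vtx, rep_ghe, act_comp]
    congr 1
    funext p
    rw [gAct]
    split_ifs with h
    · rw [Option.bind_some, vAct]
      have hb : (p.tail e h).base = rng e := rfl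
      rw [if_pos hb]
    · rfl
  | ghost_src e =>
    rw [map_mul, rep_vtx, rep_ghe, act_comp]
    congr 1
    funext p
    rw [vAct]
    split_ifs with h
    · rw [Option.bind_some]
    · simp only [Option.bind_none, gAct,
        dif_neg (show ¬ p.seq 0 = some e from fun h2 => h (p.compat0 e h2).symm)]
  | ck1_same e =>
    rw [map_mul, rep_ghe, rep_edg, act_comp, rep_vtx]
    congr 1
    funext p
    rw [eAct]
    split_ifs with h
    · rw [Option.bind_some, gAct]
      have h1 : (p.prepend e h).seq 0 = some e := rfl
      rw [dif_pos h1, vAct, if_pos h, tail_prepend]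
    · rw [vAct, if_neg h, Option.bind_none]
  | ck1_ne e f hne =>
    rw [map_mul, rep_ghe, rep_edg, act_comp, map_zero]
    have heq : (fun p : BPath src rng => (eAct src rng f p).bind (gAct src rng e)) =
        fun _ => none := by
      funext p
      rw [eAct]
      split_ifs with h
      · rw [Option.bind_some, gAct, dif_neg]
        intro hc
        have hc' : some f = some e := hc
        cases hc'
        exact hne rfl
      · rfl
    rw [heq]
    apply Finsupp.lhom_ext
    intro p c
    rw [act_single]
    simp
  | ck2 v hreg =>
    rw [rep_vtx, map_sum]
    apply Finsupp.lhom_ext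
    intro p c
    rw [LinearMap.sum_apply]
    have hterm : ∀ e ∈ (Set.not_infinite.mp hreg.2).toFinset,
        rep src rng K (edg K V E e * ghe K V E e) (Finsupp.single p c) =
          if p.seq 0 = some e then Finsupp.single p c else 0 := by
      intro e _
      rw [map_mul, rep_edg, rep_ghe, act_comp, act_single, eg_opt]
      split_ifs <;> rfl
    rw [Finset.sum_congr rfl hterm, act_single, vAct]
    by_cases hbase : p.base = v
    · rw [if_pos hbase, Option.elim_some]
      obtain ⟨e0, hp0⟩ : ∃ e0, p.seq 0 = some e0 :=
        Option.ne_none_iff_exists'.mp (fun hn => absurd (hbase ▸ hreg) (p.bdryTriv hn))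
      have hmem : e0 ∈ (Set.not_infinite.mp hreg.2).toFinset := by
        simp only [Set.Finite.mem_toFinset, Set.mem_setOf_eq]
        exact hbase ▸ p.compat0 e0 hp0
      rw [Finset.sum_eq_single_of_mem e0 hmem (fun b _ hb => if_neg (fun hc => hb
        (Option.some.inj (hp0.symm.trans hc)).symm)), if_pos hp0]
    · rw [if_neg hbase, Option.elim_none]
      symm
      apply Finset.sum_eq_zero
      intro e he
      apply if_neg
      intro hc
      have h1 : src e = p.base := p.compat0 e hc
      have h2 : src e = v := by simpa [Set.Finite.mem_toFinset] using he
      exact hbase (h1.symm.trans h2)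
  | unit =>
    rw [map_sum, map_one]
    apply Finsupp.lhom_ext
    intro p c
    rw [LinearMap.sum_apply]
    have hterm : ∀ v ∈ Finset.univ (α := V),
        rep src rng K (vtx K V E v) (Finsupp.single p c) =
          if p.base = v then Finsupp.single p c else 0 := by
      intro v _
      rw [rep_vtx, act_single, vAct]
      split_ifs <;> rfl
    rw [Finset.sum_congr rfl hterm, Finset.sum_ite_eq (Finset.univ) p.base
      (fun _ => Finsupp.single p c)]
    simp

/-- the representation of the Leavitt path algebra -/
noncomputable def lpaRep [Fintype V] : LPA K V E src rng →ₐ[K]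
    Module.End K (BPath src rng →₀ K) :=
  RingQuot.liftAlgHom K ⟨rep src rng K, fun _ _ h => rep_rel src rng K h⟩

lemma lpaRep_Vtx [Fintype V] (v : V) :
    lpaRep src rng K (Vtx K V E src rng v) = act src rng K (vAct src rng v) := by
  rw [Vtx, lpaRep, RingQuot.liftAlgHom_mkAlgHom_apply, rep_vtx]

/-- the step function for constructing a boundary path -/
noncomputable def stepF (u : V) : Option E :=
  if h : IsRegularVertex src u then
    some (Classical.choose (not_forall.mp h.1))
  else none

lemma stepF_some {u : V} {e : E} (h : stepF src u = some e) : src e = u := by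
  rw [stepF] at h
  split_ifs at h with hr
  · cases h
    have := Classical.choose_spec (not_forall.mp hr.1)
    exact not_not.mp this

lemma stepF_none {u : V} (h : stepF src u = none) : ¬ IsRegularVertex src u := by
  rw [stepF] at h
  split_ifs at h with hr
  exact hr

/-- the vertex reached after n steps -/
noncomputable def afterF (v : V) : ℕ → V
  | 0 => v
  | n+1 => (stepF src (afterF v n)).elim (afterF v n) rng

lemma afterF_succ (v : V) (n : ℕ) :
    afterF src rng v (n+1) = (stepF src (afterF src rng v n)).elim (afterF src rng v n) rng :=
  rfl

/-- a boundary path starting at any given vertex -/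
noncomputable def thePath (v : V) : BPath src rng where
  base := v
  seq := fun n => stepF src (afterF src rng v n)
  compat0 := fun e he => stepF_some src he
  compat := fun n e he => by
    change stepF src (afterF src rng v (n+1)) = some e at he
    cases hn : stepF src (afterF src rng v n) with
    | none =>
      have h1 : afterF src rng v (n+1) = afterF src rng v n := by
        rw [afterF_succ, hn, Option.elim_none]
      rw [h1, hn] at he
      exact absurd he (by simp)
    | some f =>
      refine ⟨f, rfl, ?_⟩
      have h1 : afterF src rng v (n+1) = rng f := by
        rw [afterF_succ, hn, Option.elim_some]
      rw [← h1]
      exact (stepF_some src he).symm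
  bdryTriv := fun h0 => stepF_none src h0
  bdry := fun n e he hn => by
    change stepF src (afterF src rng v n) = some e at he
    change stepF src (afterF src rng v (n+1)) = none at hn
    have h1 : afterF src rng v (n+1) = rng e := by
      rw [afterF_succ, he, Option.elim_some]
    rw [h1] at hn
    exact stepF_none src hn

lemma Vtx_ne_zero (K : Type) [Field K] [Fintype V] (v : V) :
    Vtx K V E src rng v ≠ 0 := by
  intro hc
  have h1 := lpaRep_Vtx src rng K v
  rw [hc, map_zero] at h1
  have h2 := congrArg (fun F : Module.End K (BPath src rng →₀ K) =>
    F (Finsupp.single (thePath src rng v) 1)) h1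
  simp only [LinearMap.zero_apply] at h2
  rw [act_single] at h2
  have hbase : (thePath src rng v).base = v := rfl
  rw [vAct, if_pos hbase] at h2
  simp only [Option.elim_some] at h2
  exact one_ne_zero (Finsupp.single_eq_zero.mp h2.symm)

end Representation


section LPAFacts

open scoped Classical

variable (K V E : Type) [Field K] [Fintype V] (src rng : E → V)

lemma lrel {x y : FreeAlgebra K (V ⊕ E ⊕ E)} (h : LeavittRel K V E src rng x y) :
    RingQuot.mkAlgHom K (LeavittRel K V E src rng) x =
      RingQuot.mkAlgHom K (LeavittRel K V E src rng) y :=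
  RingQuot.mkAlgHom_rel K h

lemma VV (v v' : V) : Vtx K V E src rng v * Vtx K V E src rng v' =
    if v = v' then Vtx K V E src rng v else 0 := by
  split_ifs with h
  · subst h
    rw [Vtx, ← map_mul]
    exact lrel K V E src rng (LeavittRel.vtx_same v)
  · rw [Vtx, Vtx, ← map_mul, lrel K V E src rng (LeavittRel.vtx_ne v v' h), map_zero]

lemma VE (e : E) : Vtx K V E src rng (src e) * Edg K V E src rng e = Edg K V E src rng e := by
  rw [Vtx, Edg, ← map_mul]
  exact lrel K V E src rng (LeavittRel.src_edge e)

lemma EV (e : E) : Edg K V E src rng e * Vtx K V E src rng (rng e) = Edg K V E src rng e := by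
  rw [Vtx, Edg, ← map_mul]
  exact lrel K V E src rng (LeavittRel.edge_rng e)

lemma VG (e : E) : Vtx K V E src rng (rng e) * Ghe K V E src rng e = Ghe K V E src rng e := by
  rw [Vtx, Ghe, ← map_mul]
  exact lrel K V E src rng (LeavittRel.rng_ghost e)

lemma GV (e : E) : Ghe K V E src rng e * Vtx K V E src rng (src e) = Ghe K V E src rng e := by
  rw [Vtx, Ghe, ← map_mul]
  exact lrel K V E src rng (LeavittRel.ghost_src e)

lemma GE (e f : E) : Ghe K V E src rng e * Edg K V E src rng f =
    if e = f then Vtx K V E src rng (rng e) else 0 := by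
  split_ifs with h
  · subst h
    rw [Vtx, Ghe, Edg, ← map_mul]
    exact lrel K V E src rng (LeavittRel.ck1_same e)
  · rw [Ghe, Edg, ← map_mul, lrel K V E src rng (LeavittRel.ck1_ne e f h), map_zero]

lemma CK2s (v : V) (h : IsRegularVertex src v) :
    Vtx K V E src rng v = ∑ e ∈ (Set.not_infinite.mp h.2).toFinset,
      Edg K V E src rng e * Ghe K V E src rng e := by
  rw [Vtx, lrel K V E src rng (LeavittRel.ck2 v h), map_sum]
  exact Finset.sum_congr rfl (fun e _ => by rw [map_mul, Edg, Ghe])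

lemma sumVtx : (∑ v : V, Vtx K V E src rng v) = 1 := by
  have h1 : (∑ v : V, Vtx K V E src rng v) =
      RingQuot.mkAlgHom K (LeavittRel K V E src rng) (∑ v : V, vtx K V E v) := by
    rw [map_sum]
    exact Finset.sum_congr rfl (fun v _ => by rw [Vtx])
  rw [h1, lrel K V E src rng LeavittRel.unit, map_one]

lemma VEgen (v : V) (e : E) : Vtx K V E src rng v * Edg K V E src rng e =
    if v = src e then Edg K V E src rng e else 0 := by
  split_ifs with h
  · rw [h, VE]
  · rw [← VE, ← mul_assoc, VV, if_neg h, zero_mul]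

lemma EVgen (v : V) (e : E) : Edg K V E src rng e * Vtx K V E src rng v =
    if v = rng e then Edg K V E src rng e else 0 := by
  split_ifs with h
  · rw [h, EV]
  · rw [← EV, mul_assoc, VV, if_neg (fun hc => h hc.symm), mul_zero]

lemma VGgen (v : V) (e : E) : Vtx K V E src rng v * Ghe K V E src rng e =
    if v = rng e then Ghe K V E src rng e else 0 := by
  split_ifs with h
  · rw [h, VG]
  · rw [← VG, ← mul_assoc, VV, if_neg h, zero_mul]

lemma GVgen (v : V) (e : E) : Ghe K V E src rng e * Vtx K V E src rng v =
    if v = src e then Ghe K V E src rng e else 0 := by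
  split_ifs with h
  · rw [h, GV]
  · rw [← GV, mul_assoc, VV, if_neg (fun hc => h hc.symm), mul_zero]

lemma w00_key (e : E) : Ghe K V E src rng e * (Edg K V E src rng e * Ghe K V E src rng e) *
    Edg K V E src rng e = Vtx K V E src rng (rng e) := by
  have hge : Ghe K V E src rng e * Edg K V E src rng e = Vtx K V E src rng (rng e) := by
    rw [GE, if_pos rfl]
  rw [← mul_assoc, hge, VG, hge]

lemma EG_ne_zero (e : E) : Edg K V E src rng e * Ghe K V E src rng e ≠ 0 := by
  intro h0
  have hk := w00_key K V E src rng e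
  rw [h0, mul_zero, zero_mul] at hk
  exact Vtx_ne_zero src rng K (rng e) hk.symm

lemma intSmul_cancel [CharZero K] (n : ℤ) (x : LPA K V E src rng) (hn : n ≠ 0)
    (h : n • x = 0) : x = 0 := by
  have hn' : (n : K) ≠ 0 := Int.cast_ne_zero.mpr hn
  rw [zsmul_eq_mul] at h
  have h2 : (algebraMap K (LPA K V E src rng) ((n : K)⁻¹)) *
      ((n : LPA K V E src rng) * x) = 0 := by rw [h, mul_zero]
  rw [← map_intCast (algebraMap K (LPA K V E src rng)) n, ← mul_assoc, ← map_mul,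
    inv_mul_cancel₀ hn', map_one, one_mul] at h2
  exact h2

lemma case1_units (e : E) (hne : src e ≠ rng e) :
    ∃ w : Fin 2 → Fin 2 → LPA K V E src rng,
      (∀ i j k l : Fin 2, w i j * w k l = if j = k then w i l else 0) ∧ w 0 0 ≠ 0 := by
  set Ee := Edg K V E src rng e with hEe
  set Ge := Ghe K V E src rng e with hGe
  set Ve := Vtx K V E src rng (rng e) with hVe
  have bEV : Ee * Ve = Ee := EV K V E src rng e
  have bVE0 : Ve * Ee = 0 := by
    rw [hVe, hEe, VEgen, if_neg (show ¬ rng e = src e from fun hc => hne hc.symm)]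
  have bGE : Ge * Ee = Ve := by rw [hGe, hEe, GE, if_pos rfl, hVe]
  have bGV0 : Ge * Ve = 0 := by
    rw [hGe, hVe, GVgen, if_neg (show ¬ rng e = src e from fun hc => hne hc.symm)]
  have bVG : Ve * Ge = Ge := VG K V E src rng e
  have bVV : Ve * Ve = Ve := by rw [hVe, VV, if_pos rfl]
  have bEE0 : Ee * Ee = 0 := by
    nth_rewrite 2 [hEe]
    rw [← VE K V E src rng e, ← mul_assoc, hEe, EVgen,
      if_neg (show ¬ src e = rng e from hne), zero_mul]
  have bGG0 : Ge * Ge = 0 := by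
    nth_rewrite 2 [hGe]
    rw [← VG K V E src rng e, ← mul_assoc, hGe, GVgen,
      if_neg (show ¬ rng e = src e from fun hc => hne hc.symm), zero_mul]
  have tEV : ∀ x, Ee * (Ve * x) = Ee * x := fun x => by rw [← mul_assoc, bEV]
  have tVE : ∀ x, Ve * (Ee * x) = 0 := fun x => by rw [← mul_assoc, bVE0, zero_mul]
  have tGE : ∀ x, Ge * (Ee * x) = Ve * x := fun x => by rw [← mul_assoc, bGE]
  have tGV : ∀ x, Ge * (Ve * x) = 0 := fun x => by rw [← mul_assoc, bGV0, zero_mul]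
  have tVG : ∀ x, Ve * (Ge * x) = Ge * x := fun x => by rw [← mul_assoc, bVG]
  have tVV : ∀ x, Ve * (Ve * x) = Ve * x := fun x => by rw [← mul_assoc, bVV]
  have tEE : ∀ x, Ee * (Ee * x) = 0 := fun x => by rw [← mul_assoc, bEE0, zero_mul]
  have tGG : ∀ x, Ge * (Ge * x) = 0 := fun x => by rw [← mul_assoc, bGG0, zero_mul]
  refine ⟨![![Ee * Ge, Ee], ![Ge, Ve]], ?_, ?_⟩
  · intro i j k l
    fin_cases i <;> fin_cases j <;> fin_cases k <;> fin_cases l <;>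
      simp [mul_assoc, bEV, bVE0, bGE, bGV0, bVG, bVV, bEE0, bGG0,
        tEV, tVE, tGE, tGV, tVG, tVV, tEE, tGG]
  · simpa using EG_ne_zero K V E src rng e

lemma case2_units (hloop : ∀ x, src x = rng x) (e f : E) (hef : e ≠ f)
    (hsf : src e = src f) :
    ∃ w : Fin 2 → Fin 2 → LPA K V E src rng,
      (∀ i j k l : Fin 2, w i j * w k l = if j = k then w i l else 0) ∧ w 0 0 ≠ 0 := by
  set Ee := Edg K V E src rng e with hEe
  set Ef := Edg K V E src rng f with hEf
  set Ge := Ghe K V E src rng e with hGe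
  set Gf := Ghe K V E src rng f with hGf
  set Vv := Vtx K V E src rng (src e) with hVv
  have hrng_e : rng e = src e := (hloop e).symm
  have hrng_f : rng f = src e := (hloop f).symm.trans hsf.symm
  have bGEee : Ge * Ee = Vv := by rw [hGe, hEe, GE, if_pos rfl, hrng_e, hVv]
  have bGEff : Gf * Ef = Vv := by rw [hGf, hEf, GE, if_pos rfl, hrng_f, hVv]
  have bGEef : Ge * Ef = 0 := by rw [hGe, hEf, GE, if_neg hef]
  have bGEfe : Gf * Ee = 0 := by
    rw [hGf, hEe, GE, if_neg (show ¬ f = e from fun hc => hef hc.symm)]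
  have bVGe : Vv * Ge = Ge := by rw [hVv, hGe, VGgen, if_pos hrng_e.symm]
  have bVGf : Vv * Gf = Gf := by rw [hVv, hGf, VGgen, if_pos hrng_f.symm]
  have tGEee : ∀ x, Ge * (Ee * x) = Vv * x := fun x => by rw [← mul_assoc, bGEee]
  have tGEff : ∀ x, Gf * (Ef * x) = Vv * x := fun x => by rw [← mul_assoc, bGEff]
  have tGEef : ∀ x, Ge * (Ef * x) = 0 := fun x => by rw [← mul_assoc, bGEef, zero_mul]
  have tGEfe : ∀ x, Gf * (Ee * x) = 0 := fun x => by rw [← mul_assoc, bGEfe, zero_mul]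
  refine ⟨![![Ee * Ge, Ee * Gf], ![Ef * Ge, Ef * Gf]], ?_, ?_⟩
  · intro i j k l
    fin_cases i <;> fin_cases j <;> fin_cases k <;> fin_cases l <;>
      simp [mul_assoc, bGEee, bGEff, bGEef, bGEfe, bVGe, bVGf,
        tGEee, tGEff, tGEef, tGEfe]
  · simpa using EG_ne_zero K V E src rng e

end LPAFacts

section CommCase

open scoped Classical

variable (K V E : Type) [Field K] [Fintype V] (src rng : E → V)

lemma adjoin_comm_aux {A : Type} [Semiring A] [Algebra K A] {S : Set A}
    (h : ∀ a ∈ S, ∀ b ∈ S, a * b = b * a) :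
    ∀ x ∈ Algebra.adjoin K S, ∀ y ∈ Algebra.adjoin K S, x * y = y * x := by
  have key : ∀ b ∈ S, ∀ y ∈ Algebra.adjoin K S, b * y = y * b := by
    intro b hb y hy
    refine Algebra.adjoin_induction (fun z hz => h b hb z hz) (fun r => ?_)
      (fun u v hu hv ihu ihv => ?_) (fun u v hu hv ihu ihv => ?_) hy
    · exact (Algebra.commutes r b).symm
    · rw [mul_add, add_mul, ihu, ihv]
    · calc b*(u*v) = (b*u)*v := (mul_assoc _ _ _).symm
        _ = (u*b)*v := by rw [ihu]
        _ = u*(b*v) := mul_assoc _ _ _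
        _ = u*(v*b) := by rw [ihv]
        _ = (u*v)*b := (mul_assoc _ _ _).symm
  intro x hx y hy
  refine Algebra.adjoin_induction (fun z hz => key z hz y hy)
    (fun r => Algebra.commutes r y)
    (fun u v hu hv ihu ihv => by rw [add_mul, mul_add, ihu, ihv])
    (fun u v hu hv ihu ihv => ?_) hx
  calc (u*v)*y = u*(v*y) := mul_assoc _ _ _
    _ = u*(y*v) := by rw [ihv]
    _ = (u*y)*v := (mul_assoc _ _ _).symm
    _ = (y*u)*v := by rw [ihu]
    _ = y*(u*v) := mul_assoc _ _ _

variable (hloop : ∀ x, src x = rng x) (hinj : ∀ x y, src x = src y → x = y)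

lemma commVV (v v' : V) : Vtx K V E src rng v * Vtx K V E src rng v' =
    Vtx K V E src rng v' * Vtx K V E src rng v := by
  by_cases h : v = v'
  · subst h; rfl
  · rw [VV, VV, if_neg h, if_neg (fun hc => h hc.symm)]

include hloop in
lemma commVE (v : V) (e : E) : Vtx K V E src rng v * Edg K V E src rng e =
    Edg K V E src rng e * Vtx K V E src rng v := by
  rw [VEgen, EVgen]
  by_cases h : v = src e
  · rw [if_pos h, if_pos (h.trans (hloop e))]
  · rw [if_neg h, if_neg (fun hc => h (hc.trans (hloop e).symm))]

include hloop in
lemma commVG (v : V) (e : E) : Vtx K V E src rng v * Ghe K V E src rng e =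
    Ghe K V E src rng e * Vtx K V E src rng v := by
  rw [VGgen, GVgen]
  by_cases h : v = src e
  · rw [if_pos (h.trans (hloop e)), if_pos h]
  · rw [if_neg (fun hc => h (hc.trans (hloop e).symm)), if_neg h]

include hloop hinj in
lemma commEE (e f : E) : Edg K V E src rng e * Edg K V E src rng f =
    Edg K V E src rng f * Edg K V E src rng e := by
  have key : ∀ a b : E, a ≠ b → Edg K V E src rng a * Edg K V E src rng b = 0 := by
    intro a b hab
    rw [← VE K V E src rng b, ← mul_assoc, EVgen,
      if_neg (show ¬ src b = rng a from fun hc => hab (hinj b a (hc.trans (hloop a).symm)).symm),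
      zero_mul]
  by_cases h : e = f
  · subst h; rfl
  · rw [key e f h, key f e (fun hc => h hc.symm)]

include hloop hinj in
lemma commGG (e f : E) : Ghe K V E src rng e * Ghe K V E src rng f =
    Ghe K V E src rng f * Ghe K V E src rng e := by
  have key : ∀ a b : E, a ≠ b → Ghe K V E src rng a * Ghe K V E src rng b = 0 := by
    intro a b hab
    rw [← VG K V E src rng b, ← mul_assoc, GVgen,
      if_neg (show ¬ rng b = src a from fun hc =>
        hab (hinj b a ((hloop b).trans hc)).symm), zero_mul]
  by_cases h : e = f
  · subst h; rfl
  · rw [key e f h, key f e (fun hc => h hc.symm)]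

include hinj in
lemma EG_eq_V (e : E) : Edg K V E src rng e * Ghe K V E src rng e =
    Vtx K V E src rng (src e) := by
  have reg : IsRegularVertex src (src e) := by
    constructor
    · exact fun hs => hs e rfl
    · rw [IsInfEmitter, Set.not_infinite]
      exact Set.Finite.subset (Set.finite_singleton e)
        (fun x hx => Set.mem_singleton_iff.mpr (hinj x e hx))
  have hT : (Set.not_infinite.mp reg.2).toFinset = {e} := by
    ext x
    simp only [Set.Finite.mem_toFinset, Set.mem_setOf_eq, Finset.mem_singleton]
    exact ⟨fun hx => hinj x e hx, fun hx => by rw [hx]⟩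
  rw [CK2s K V E src rng (src e) reg, hT, Finset.sum_singleton]

include hloop hinj in
lemma commEG (e f : E) : Edg K V E src rng e * Ghe K V E src rng f =
    Ghe K V E src rng f * Edg K V E src rng e := by
  by_cases h : e = f
  · subst h
    rw [EG_eq_V K V E src rng hinj, GE, if_pos rfl, hloop e]
  · rw [GE, if_neg (fun hc => h hc.symm), ← VG K V E src rng f, ← mul_assoc, EVgen,
      if_neg (show ¬ rng f = rng e from fun hc =>
        h (hinj e f ((hloop e).trans (hc.symm.trans (hloop f).symm)))),
      zero_mul]

include hloop hinj in
lemma comm_gen (z z' : V ⊕ E ⊕ E) :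
    RingQuot.mkAlgHom K (LeavittRel K V E src rng) (FreeAlgebra.ι K z) *
      RingQuot.mkAlgHom K (LeavittRel K V E src rng) (FreeAlgebra.ι K z') =
    RingQuot.mkAlgHom K (LeavittRel K V E src rng) (FreeAlgebra.ι K z') *
      RingQuot.mkAlgHom K (LeavittRel K V E src rng) (FreeAlgebra.ι K z) := by
  rcases z with v | e | e <;> rcases z' with v' | e' | e'
  · exact commVV K V E src rng v v'
  · exact commVE K V E src rng hloop v e'
  · exact commVG K V E src rng hloop v e'
  · exact (commVE K V E src rng hloop v' e).symm
  · exact commEE K V E src rng hloop hinj e e'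
  · exact commEG K V E src rng hloop hinj e e'
  · exact (commVG K V E src rng hloop v' e).symm
  · exact (commEG K V E src rng hloop hinj e' e).symm
  · exact commGG K V E src rng hloop hinj e e'

include hloop hinj in
lemma lpa_comm : ∀ x y : LPA K V E src rng, x * y = y * x := by
  have hS : Algebra.adjoin K (Set.range (fun z : V ⊕ E ⊕ E =>
      RingQuot.mkAlgHom K (LeavittRel K V E src rng) (FreeAlgebra.ι K z))) = ⊤ := by
    have h1 : (Set.range (fun z : V ⊕ E ⊕ E =>
        RingQuot.mkAlgHom K (LeavittRel K V E src rng) (FreeAlgebra.ι K z))) =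
        (RingQuot.mkAlgHom K (LeavittRel K V E src rng)) '' (Set.range (FreeAlgebra.ι K)) := by
      rw [← Set.range_comp]
      rfl
    rw [h1, ← AlgHom.map_adjoin, FreeAlgebra.adjoin_range_ι, Algebra.map_top,
      AlgHom.range_eq_top]
    exact RingQuot.mkAlgHom_surjective K _
  intro x y
  have hgen : ∀ a ∈ (Set.range (fun z : V ⊕ E ⊕ E =>
      RingQuot.mkAlgHom K (LeavittRel K V E src rng) (FreeAlgebra.ι K z))),
      ∀ b ∈ (Set.range (fun z : V ⊕ E ⊕ E =>
      RingQuot.mkAlgHom K (LeavittRel K V E src rng) (FreeAlgebra.ι K z))), a * b = b * a := by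
    rintro a ⟨z, rfl⟩ b ⟨z', rfl⟩
    exact comm_gen K V E src rng hloop hinj z z'
  exact adjoin_comm_aux K hgen x (hS.symm ▸ Algebra.mem_top) y (hS.symm ▸ Algebra.mem_top)

end CommCase

/-- Let `K` be a field of characteristic `0` and `E` a directed graph with finitely
many vertices such that the Leavitt path algebra `L_K(E)` is noncommutative. Then the
multiplicative group of units of `L_K(E)` contains a non-cyclic free subgroup: there
are units `a, b` such that the group homomorphism from the free group on two
generators (indexed by `Bool`) sending the generators to `a` and `b` is injective. -/
theorem units_of_LPA_contains_free_subgroup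
    (K V E : Type) [Field K] [CharZero K] [Fintype V] (src rng : E → V)
    (hnc : ∃ x y : LPA K V E src rng, x * y ≠ y * x) :
    ∃ a b : (LPA K V E src rng)ˣ,
      Function.Injective (FreeGroup.lift fun t : Bool => if t then a else b) := by
  have hK : ∀ (n : ℤ) (x : LPA K V E src rng), n ≠ 0 → n • x = 0 → x = 0 :=
    fun n x hn h => intSmul_cancel K V E src rng n x hn h
  by_cases hc1 : ∃ e, src e ≠ rng e
  · obtain ⟨e, hne⟩ := hc1
    obtain ⟨w, hw, h00⟩ := case1_units K V E src rng e hne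
    exact free_units_of_matrix_units hK w hw h00
  · push_neg at hc1
    by_cases hc2 : ∃ e f, e ≠ f ∧ src e = src f
    · obtain ⟨e, f, hef, hsf⟩ := hc2
      obtain ⟨w, hw, h00⟩ := case2_units K V E src rng hc1 e f hef hsf
      exact free_units_of_matrix_units hK w hw h00
    · exfalso
      push_neg at hc2
      obtain ⟨x, y, hxy⟩ := hnc
      have hinj : ∀ a b : E, src a = src b → a = b := by
        intro a b hab
        by_contra hne
        exact hc2 a b hne hab
      exact hxy (lpa_comm K V E src rng hc1 hinj x y)
end
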